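/- For every index i with 1 ≤ i ≤ N, the per-anchor OT-weighted contrastive term is bounded above by the per-anchor InfoNCE term: −log (d_{ii} / ∑_{j=1}^r d_{ij}) ≤ −log (e_{ii} / ∑_{j=1}^N e_{ij}). -/

import Mathlib

/-- Per-anchor bound: with OT-weighted affinities `d i j = exp (q i j * s i j / τ)` and
plain affinities `e i j = exp (s i j / τ)`, where `0 ≤ q i j ≤ 1`, `q i i = 1`,
`s i j ≥ 0`, and restricted sums over `j` range over the first `r` indices,
`-log (d i i / ∑_{j < r} d i j) ≤ -log (e i i / ∑_j e i j)`. -/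
theorem ot_per_anchor_le_infonce (N r : ℕ) (hN : 1 ≤ N) (hr : 1 ≤ r) (hrN : r ≤ N)
    (τ : ℝ) (hτ : 0 < τ) (s q : Fin N → Fin N → ℝ)
    (hs : ∀ i j, 0 ≤ s i j) (hq0 : ∀ i j, 0 ≤ q i j) (hq1 : ∀ i j, q i j ≤ 1)
    (hqd : ∀ i, q i i = 1) (i : Fin N) :
    -Real.log (Real.exp (q i i * s i i / τ) /
        ∑ j ∈ Finset.univ.filter (fun j : Fin N => (j : ℕ) < r),
          Real.exp (q i j * s i j / τ))
      ≤ -Real.log (Real.exp (s i i / τ) / ∑ j, Real.exp (s i j / τ)) := by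
  have hqd' : q i i * s i i = s i i := by rw [hqd]; ring
  rw [hqd']
  have hSdpos : 0 < ∑ j ∈ Finset.univ.filter (fun j : Fin N => (j : ℕ) < r),
      Real.exp (q i j * s i j / τ) := by
    apply Finset.sum_pos (fun j _ => Real.exp_pos _)
    exact ⟨⟨0, lt_of_lt_of_le hr hrN⟩, by simp; omega⟩
  have hSepos : 0 < ∑ j : Fin N, Real.exp (s i j / τ) := by
    apply Finset.sum_pos (fun j _ => Real.exp_pos _)
    exact Finset.univ_nonempty_iff.mpr (Fin.pos_iff_nonempty.mp (lt_of_lt_of_le Nat.one_pos hN))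
  have hle : (∑ j ∈ Finset.univ.filter (fun j : Fin N => (j : ℕ) < r),
      Real.exp (q i j * s i j / τ)) ≤ ∑ j : Fin N, Real.exp (s i j / τ) := by
    refine le_trans (Finset.sum_le_sum (fun j _ => ?_)) (Finset.sum_le_sum_of_subset_of_nonneg
      (Finset.filter_subset _ _) (fun j _ _ => (Real.exp_pos _).le))
    apply Real.exp_le_exp.mpr
    apply div_le_div_of_nonneg_right ?_ hτ.le
    nlinarith [hq1 i j, hq0 i j, hs i j]
  rw [Real.log_div (Real.exp_ne_zero _) (ne_of_gt hSdpos),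
    Real.log_div (Real.exp_ne_zero _) (ne_of_gt hSepos)]
  have := Real.log_le_log hSdpos hle
  linarith
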